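/- arXiv:2006.12929 — 2 statements merged into one kernel-verified Lean document; each statement's English description precedes it below -/
import Mathlib

section
/- For real numbers L, A, D ≥ 0, one has min(3L − D, (3/2)L + (1/2)D) + min((3/2)A + 2D, 3A + D) − D ≤ (12/5)(L + A). -/
theorem stmt_2 (L A D : ℝ) (hL : 0 ≤ L) (hA : 0 ≤ A) (hD : 0 ≤ D) :
    min (3 * L - D) ((3/2) * L + (1/2) * D)
      + min ((3/2) * A + 2 * D) (3 * A + D) - D ≤ (12/5) * (L + A) := by
  have h1 : min (3 * L - D) ((3/2) * L + (1/2) * D)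
      ≤ (3/5) * (3*L - D) + (2/5) * ((3/2)*L + (1/2)*D) := by
    rcases le_total (3*L - D) ((3/2)*L + (1/2)*D) with h | h
    · rw [min_eq_left h]; linarith
    · rw [min_eq_right h]; linarith
  have h2 : min ((3/2) * A + 2 * D) (3 * A + D)
      ≤ (2/5) * ((3/2)*A + 2*D) + (3/5) * (3*A + D) := by
    rcases le_total ((3/2)*A + 2*D) (3*A + D) with h | h
    · rw [min_eq_left h]; linarith
    · rw [min_eq_right h]; linarith
  linarith
end

section
/- Let d be a metric on a finite set V and let W = (v₀, v₁, …, v_m) be a walk in the complete graph on V starting at s = v₀ and ending at t = v_m that visits every vertex of V. Then there exists a Hamiltonian path from s to t whose length is at most the length of W. -/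
open List

section
variable {V : Type*} [MetricSpace V]

noncomputable def llen : List V → ℝ
  | [] => 0
  | [_] => 0
  | a :: b :: l => dist a b + llen (b :: l)

lemma llen_nonneg : ∀ l : List V, 0 ≤ llen l
  | [] => le_refl _
  | [_] => le_refl _
  | _ :: b :: l => add_nonneg dist_nonneg (llen_nonneg (b :: l))

lemma llen_le_cons (b : V) : ∀ l : List V, llen l ≤ llen (b :: l)
  | [] => llen_nonneg _
  | a :: l => le_add_of_nonneg_left dist_nonneg

lemma llen_cons_le (a b : V) : ∀ l : List V, llen (a :: l) ≤ dist a b + llen (b :: l)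
  | [] => by simpa [llen] using dist_nonneg
  | c :: l => by
      show dist a c + llen (c :: l) ≤ dist a b + (dist b c + llen (c :: l))
      rw [← add_assoc]
      exact add_le_add_left (dist_triangle a b c) _

lemma sublist_llen_cons {l₁ l₂ : List V} (h : l₁ <+ l₂) :
    ∀ a, llen (a :: l₁) ≤ llen (a :: l₂) := by
  induction h with
  | slnil => intro a; exact le_rfl
  | cons b h ih =>
      intro a
      calc llen (a :: _) ≤ dist a b + llen (b :: _) := llen_cons_le a b _
        _ ≤ dist a b + llen (b :: _) := add_le_add_right (ih b) _
  | cons_cons b h ih =>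
      intro a
      show dist a b + llen (b :: _) ≤ dist a b + llen (b :: _)
      exact add_le_add_right (ih b) _

lemma Sublist_llen_le {l₁ l₂ : List V} (h : l₁ <+ l₂) : llen l₁ ≤ llen l₂ := by
  induction h with
  | slnil => exact le_rfl
  | cons b h ih => exact ih.trans (llen_le_cons b _)
  | cons_cons b h ih => exact sublist_llen_cons h b

lemma walk_llen {G : SimpleGraph V} {u v : V} (p : G.Walk u v) :
    (p.edges.map (Sym2.lift ⟨dist, fun a b => dist_comm a b⟩)).sum = llen p.support := by
  induction p with
  | nil => simp [llen]
  | @cons u w v h p ih =>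
      rw [SimpleGraph.Walk.edges_cons, List.map_cons, List.sum_cons, ih,
        SimpleGraph.Walk.support_cons, p.support_eq_cons, llen, ← p.support_eq_cons]
      simp

end

section
variable {V : Type*} [DecidableEq V]

def mkW : (a : V) → (l : List V) → List.Chain (· ≠ ·) a l →
    (⊤ : SimpleGraph V).Walk a (l.getLastD a)
  | _, [], _ => SimpleGraph.Walk.nil
  | a, b :: l, h =>
      (SimpleGraph.Walk.cons (by simpa using (List.chain_cons.mp h).1)
        (mkW b l (List.chain_cons.mp h).2)).copy rfl (List.getLastD_cons (a := a) (b := b) (l := l)).symm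

lemma support_mkW : ∀ (a : V) (l : List V) (h : List.Chain (· ≠ ·) a l),
    (mkW a l h).support = a :: l
  | _, [], _ => rfl
  | a, b :: l, h => by
      rw [mkW, SimpleGraph.Walk.support_copy, SimpleGraph.Walk.support_cons,
        support_mkW b l (List.chain_cons.mp h).2]

lemma getLast?_cons_of_ne_nil {a : V} {l : List V} (h : l ≠ []) :
    (a :: l).getLast? = l.getLast? := by
  cases l with
  | nil => exact absurd rfl h
  | cons b m => exact List.getLast?_cons_cons

lemma getLast?_filter {p : V → Bool} {t : V} (hp : p t = true) :
    ∀ l : List V, l.getLast? = some t → (l.filter p).getLast? = some t := by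
  intro l
  induction l with
  | nil => simp
  | cons a l ih =>
      intro hl
      cases l with
      | nil =>
          simp at hl
          subst hl
          simp [List.filter, hp]
      | cons b m =>
          rw [List.getLast?_cons_cons] at hl
          have h2 := ih hl
          have hne : (b :: m).filter p ≠ [] := by
            intro h; rw [h] at h2; simp at h2
          rw [List.filter_cons]
          split
          · rw [_root_.getLast?_cons_of_ne_nil hne]; exact h2
          · exact h2

lemma getLast?_dedup : ∀ l : List V, l.dedup.getLast? = l.getLast? := by
  intro l
  induction l with
  | nil => rfl
  | cons a l ih =>
      by_cases hm : a ∈ l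
      · have hne : l ≠ [] := by rintro rfl; simp at hm
        rw [List.dedup_cons_of_mem hm, ih, _root_.getLast?_cons_of_ne_nil hne]
      · rw [List.dedup_cons_of_notMem hm]
        cases l with
        | nil => rfl
        | cons b m =>
            have hne : (b :: m).dedup ≠ [] := by simp [List.dedup_eq_nil]
            rw [_root_.getLast?_cons_of_ne_nil hne, ih,
              _root_.getLast?_cons_of_ne_nil (List.cons_ne_nil b m)]
end

/-- Short-cutting: given a walk `W` from `s` to `t` in the complete graph on a
finite metric space that visits every vertex, there is a Hamiltonian `s`–`t`
path whose length is at most the length of `W`. -/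
theorem stmt_12 {V : Type*} [Fintype V] [DecidableEq V] [MetricSpace V]
    (s t : V) (hst : s ≠ t) (W : (⊤ : SimpleGraph V).Walk s t)
    (hW : ∀ v : V, v ∈ W.support) :
    ∃ P : (⊤ : SimpleGraph V).Walk s t, P.IsHamiltonian ∧
      (P.edges.map (Sym2.lift ⟨dist, fun a b => dist_comm a b⟩)).sum ≤
      (W.edges.map (Sym2.lift ⟨dist, fun a b => dist_comm a b⟩)).sum := by
  classical
  set tl := W.support.tail with htl
  have hsupp : W.support = s :: tl := W.support_eq_cons
  have htlast : W.support.getLast? = some t := by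
    rw [List.getLast?_eq_getLast (W.support_ne_nil), W.getLast_support]
  have htl_ne : tl ≠ [] := by
    intro h
    rw [hsupp, h] at htlast
    simp at htlast
    exact hst htlast.symm.symm
  have htl_last : tl.getLast? = some t := by
    rw [hsupp, _root_.getLast?_cons_of_ne_nil htl_ne] at htlast; exact htlast
  set X := (tl.filter (fun v => v ≠ s)).dedup with hX
  have hXlast : X.getLast? = some t := by
    rw [hX, getLast?_dedup]
    exact getLast?_filter (by simp [hst.symm]) tl htl_last
  have hXsub : X <+ tl := ((tl.filter _).dedup_sublist).trans (List.filter_sublist (l := tl))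
  have hsX : s ∉ X := by
    intro h
    have := List.of_mem_filter (List.mem_dedup.mp h)
    simp at this
  have hnodup : (s :: X).Nodup := List.nodup_cons.mpr ⟨hsX, List.nodup_dedup _⟩
  have hchain : List.Chain (· ≠ ·) s X := hnodup.isChain
  have hlastD : X.getLastD s = t := by
    rw [List.getLastD_eq_getLast?, hXlast]; rfl
  refine ⟨(mkW s X hchain).copy rfl hlastD, ?_, ?_⟩
  · intro v
    have hsupp' : ((mkW s X hchain).copy rfl hlastD).support = s :: X := by
      rw [SimpleGraph.Walk.support_copy, support_mkW]
    rw [hsupp']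
    refine List.count_eq_one_of_mem hnodup ?_
    by_cases hv : v = s
    · simp [hv]
    · have : v ∈ tl := by
        have := hW v
        rw [hsupp] at this
        rcases List.mem_cons.mp this with h | h
        · exact absurd h hv
        · exact h
      exact List.mem_cons_of_mem _ (List.mem_dedup.mpr
        (List.mem_filter.mpr ⟨this, by simp [hv]⟩))
  · rw [walk_llen, walk_llen, SimpleGraph.Walk.support_copy, support_mkW, hsupp]
    exact Sublist_llen_le (hXsub.cons₂ s)
end
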